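/- Let 2 ≤ r < s be integers. If there exists an (r,s;5)-balanced biregular graph of order exactly rs + (s−r)² + 1, then r = 2 and s = 3. -/

import Mathlib

open SimpleGraph Set

/-- The degree of a vertex, via the natural cardinality of its neighbor set. -/
noncomputable def deg {V : Type*} (G : SimpleGraph V) (v : V) : ℕ :=
  (G.neighborSet v).ncard

/-- Number of edges both of whose endpoints have degree `d`. -/
noncomputable def edgeCountDeg {V : Type*} (G : SimpleGraph V) (d : ℕ) : ℕ :=
  {e ∈ G.edgeSet | ∀ v ∈ e, deg G v = d}.ncard

/-- An `(r,s;g)`-balanced biregular graph: girth `g`, degree set exactly `{r, s}`,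
and equally many vertices of degree `r` as of degree `s`. -/
def IsBabi {V : Type*} (r s g : ℕ) (G : SimpleGraph V) : Prop :=
  G.girth = g ∧ (∀ v, deg G v = r ∨ deg G v = s) ∧
  (∃ v, deg G v = r) ∧ (∃ v, deg G v = s) ∧
  {v | deg G v = r}.ncard = {v | deg G v = s}.ncard

section BabiAux

open Finset

variable {V : Type*} {G : SimpleGraph V}


lemma babi_triangle_cycle {a b c : V} (hab : G.Adj a b) (hbc : G.Adj b c) (hca : G.Adj c a) :
    ∃ w : G.Walk a a, w.IsCycle ∧ w.length = 3 := by
  have h1 : a ≠ b := hab.ne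
  have h2 : b ≠ c := hbc.ne
  have h3 : c ≠ a := hca.ne
  refine ⟨Walk.cons hab (Walk.cons hbc (Walk.cons hca Walk.nil)), ?_, by simp⟩
  rw [Walk.cons_isCycle_iff]
  refine ⟨Walk.IsPath.cons (Walk.IsPath.cons (by simp) (by simp [h3])) ?_, ?_⟩
  · simp [h1, h1.symm, h2, h3.symm]
  · simp [Sym2.eq, Sym2.rel_iff', h1, h2, h3, h1.symm, h2.symm, h3.symm]

lemma babi_square_cycle {a b c d : V} (hab : G.Adj a b) (hbc : G.Adj b c) (hcd : G.Adj c d)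
    (hda : G.Adj d a) (hac : a ≠ c) (hbd : b ≠ d) :
    ∃ w : G.Walk a a, w.IsCycle ∧ w.length = 4 := by
  have h1 : a ≠ b := hab.ne
  have h2 : b ≠ c := hbc.ne
  have h3 : c ≠ d := hcd.ne
  have h4 : d ≠ a := hda.ne
  refine ⟨Walk.cons hab (Walk.cons hbc (Walk.cons hcd (Walk.cons hda Walk.nil))), ?_, by simp⟩
  rw [Walk.cons_isCycle_iff]
  refine ⟨Walk.IsPath.cons (Walk.IsPath.cons (Walk.IsPath.cons (by simp) (by simp [h4]))
    (by simp [h3, hac.symm])) ?_, ?_⟩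
  · simp [h2, hbd, h1.symm]
  · simp [Sym2.eq, Sym2.rel_iff', h1, h2, h3, h4, h1.symm, h2.symm, h3.symm, h4.symm, hac, hbd,
      hac.symm, hbd.symm]


lemma babi_girth_min_len (h5 : G.girth = 5) {a : V} (w : G.Walk a a) (hw : w.IsCycle) :
    5 ≤ w.length := by
  have he : G.egirth = (5 : ℕ∞) := by
    rwa [SimpleGraph.girth, ENat.toNat_eq_iff (by norm_num)] at h5
  have := SimpleGraph.le_egirth.mp he.ge a w hw
  exact_mod_cast this




lemma babi_arith1 (r s t a k : ℤ) (hr : 2 ≤ r) (hst : s = r + t) (ht : 1 ≤ t)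
    (ha : a + k = s) (hmz : 1 + (r * a + s * k) ≤ r * s + t ^ 2 + 1) : k ≤ t := by
  nlinarith [ha, hmz]

lemma babi_arith2 (r t : ℤ) (hr : 2 ≤ r) (ht : 1 ≤ t)
    (h : r * (r + t) + t ^ 2 + 1 ≤ 2 * (t * r + r)) : r = 2 ∧ t = 1 := by
  have ht_le : t ≤ 1 := by nlinarith [sq_nonneg (2 * r - t - 2)]
  have ht1 : t = 1 := le_antisymm ht_le ht
  subst ht1
  have : r ≤ 2 := by nlinarith
  exact ⟨le_antisymm this hr, rfl⟩

lemma babi_moore_card [Fintype V] [DecidableEq V] [DecidableRel G.Adj]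
    (h3 : ∀ ⦃a b c : V⦄, G.Adj a b → G.Adj b c → G.Adj c a → False)
    (h4 : ∀ ⦃a b x y : V⦄, a ≠ b → x ≠ y → G.Adj a x → G.Adj x b → G.Adj b y → G.Adj y a → False)
    (u : V) :
    (insert u (G.neighborFinset u) ∪
      (G.neighborFinset u).biUnion (fun w => G.neighborFinset w \ {u})).card
    = 1 + G.degree u + ∑ w ∈ G.neighborFinset u, (G.degree w - 1) := by
  have hdisj : Disjoint (insert u (G.neighborFinset u))
      ((G.neighborFinset u).biUnion (fun w => G.neighborFinset w \ {u})) := by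
    rw [Finset.disjoint_left]
    intro x hx hx2
    obtain ⟨w, hw, hxw⟩ := Finset.mem_biUnion.mp hx2
    rw [Finset.mem_sdiff, Finset.mem_singleton] at hxw
    rw [SimpleGraph.mem_neighborFinset] at hw
    have hxwadj : G.Adj w x := (SimpleGraph.mem_neighborFinset _ _ _).mp hxw.1
    rcases Finset.mem_insert.mp hx with rfl | hx
    · exact hxw.2 rfl
    · rw [SimpleGraph.mem_neighborFinset] at hx
      exact h3 hw hxwadj hx.symm
  rw [Finset.card_union_of_disjoint hdisj, Finset.card_insert_of_notMem (by simp),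
    Finset.card_biUnion]
  · have hdeg : #(G.neighborFinset u) + 1 = 1 + G.degree u := by
      rw [SimpleGraph.degree]; omega
    rw [hdeg]
    congr 1
    apply Finset.sum_congr rfl
    intro w hw
    rw [SimpleGraph.mem_neighborFinset] at hw
    rw [Finset.card_sdiff_of_subset (by simp [hw.symm]), Finset.card_singleton]
    rfl
  · intro w hw w' hw' hne
    rw [Finset.mem_coe, SimpleGraph.mem_neighborFinset] at hw hw'
    rw [Function.onFun, Finset.disjoint_left]
    intro x hx hx'
    rw [Finset.mem_sdiff, Finset.mem_singleton, SimpleGraph.mem_neighborFinset] at hx hx'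
    exact h4 hne hx.2 hx.1 hx'.1.symm hw'.symm hw


lemma babi_sum_inter_comm [Fintype V] [DecidableEq V] [DecidableRel G.Adj] (A B : Finset V) :
    ∑ u ∈ A, #(G.neighborFinset u ∩ B) = ∑ v ∈ B, #(G.neighborFinset v ∩ A) := by
  have key : ∀ (u : V) (C : Finset V),
      #(G.neighborFinset u ∩ C) = ∑ v ∈ C, if G.Adj u v then 1 else 0 := by
    intro u C
    rw [← Finset.card_filter]
    congr 1
    ext v
    simp [SimpleGraph.mem_neighborFinset, and_comm]
  simp_rw [key]
  rw [Finset.sum_comm]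
  apply Finset.sum_congr rfl
  intro v _
  apply Finset.sum_congr rfl
  intro u _
  simp_rw [SimpleGraph.adj_comm]

set_option maxHeartbeats 1000000 in
lemma babi_main [Fintype V] [DecidableEq V] {G : SimpleGraph V} [DecidableRel G.Adj]
    {r s : ℕ} (hr : 2 ≤ r) (hrs : r < s)
    (h3 : ∀ ⦃a b c : V⦄, G.Adj a b → G.Adj b c → G.Adj c a → False)
    (h4 : ∀ ⦃a b x y : V⦄, a ≠ b → x ≠ y → G.Adj a x → G.Adj x b → G.Adj b y → G.Adj y a → False)
    (hdeg : ∀ v, G.degree v = r ∨ G.degree v = s)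
    (hexs : ∃ v, G.degree v = s)
    (hbal : #(Finset.univ.filter (fun v => G.degree v = r)) =
      #(Finset.univ.filter (fun v => G.degree v = s)))
    (hcard : Fintype.card V = r * s + (s - r) ^ 2 + 1) :
    r = 2 ∧ s = 3 := by
  obtain ⟨t, ht1, hst⟩ : ∃ t, 1 ≤ t ∧ s = r + t := ⟨s - r, by omega, by omega⟩
  have hsr : s - r = t := by omega
  rw [hsr] at hcard
  set R : Finset V := Finset.univ.filter (fun v => G.degree v = r) with hRdef
  set S : Finset V := Finset.univ.filter (fun v => G.degree v = s) with hSdef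
  have hmemR : ∀ v, v ∈ R ↔ G.degree v = r := fun v => by simp [hRdef]
  have hmemS : ∀ v, v ∈ S ↔ G.degree v = s := fun v => by simp [hSdef]
  set m : ℕ := #S with hmdef
  -- n = 2m
  have hRS_disjoint : Disjoint R S := by
    rw [Finset.disjoint_left]
    intro v hvR hvS
    rw [hmemR] at hvR
    rw [hmemS] at hvS
    omega
  have hRS_union : R ∪ S = Finset.univ := by
    apply Finset.eq_univ_of_forall
    intro v
    rw [Finset.mem_union, hmemR, hmemS]
    exact hdeg v
  have hn2m : Fintype.card V = 2 * m := by
    have := Finset.card_union_of_disjoint hRS_disjoint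
    rw [hRS_union, Finset.card_univ] at this
    omega
  -- split of neighborhoods
  have hsplit : ∀ u : V, #(G.neighborFinset u ∩ R) + #(G.neighborFinset u ∩ S)
      = G.degree u := by
    intro u
    rw [← Finset.card_union_of_disjoint
        (Finset.disjoint_of_subset_left Finset.inter_subset_right
          (Finset.disjoint_of_subset_right Finset.inter_subset_right hRS_disjoint)),
      ← Finset.inter_union_distrib_left, hRS_union, Finset.inter_univ]
    rfl
  -- sum of degrees over a neighborhood
  have hsumdeg : ∀ u : V, ∑ w ∈ G.neighborFinset u, G.degree w
      = r * #(G.neighborFinset u ∩ R) + s * #(G.neighborFinset u ∩ S) := by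
    intro u
    have hU : G.neighborFinset u = (G.neighborFinset u ∩ R) ∪ (G.neighborFinset u ∩ S) := by
      rw [← Finset.inter_union_distrib_left, hRS_union, Finset.inter_univ]
    nth_rewrite 1 [hU]
    rw [Finset.sum_union (Finset.disjoint_of_subset_left Finset.inter_subset_right
      (Finset.disjoint_of_subset_right Finset.inter_subset_right hRS_disjoint))]
    rw [Finset.sum_congr rfl (fun w hw => (hmemR w).mp (Finset.mem_inter.mp hw).2),
      Finset.sum_congr rfl (fun w hw => (hmemS w).mp (Finset.mem_inter.mp hw).2)]
    simp [Finset.sum_const, mul_comm]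
  -- Moore bound applied to u ∈ S
  have hmoore : ∀ u ∈ S, 1 + (r * #(G.neighborFinset u ∩ R) + s * #(G.neighborFinset u ∩ S))
      ≤ Fintype.card V := by
    intro u hu
    have hds : G.degree u = s := (hmemS u).mp hu
    have hT := babi_moore_card h3 h4 u
    have hle : (insert u (G.neighborFinset u) ∪
        (G.neighborFinset u).biUnion (fun w => G.neighborFinset w \ {u})).card
        ≤ Fintype.card V := Finset.card_le_univ _
    rw [hT] at hle
    have hsub : ∑ w ∈ G.neighborFinset u, (G.degree w - 1) + G.degree u
        = ∑ w ∈ G.neighborFinset u, G.degree w := by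
      have hcardN : G.degree u = #(G.neighborFinset u) := rfl
      rw [hcardN, Finset.card_eq_sum_ones, ← Finset.sum_add_distrib]
      apply Finset.sum_congr rfl
      intro w _
      have := hdeg w
      omega
    rw [hsumdeg] at hsub
    omega
  -- per-vertex bound: #(N u ∩ S) ≤ t for u ∈ S
  have hkS_le : ∀ u ∈ S, #(G.neighborFinset u ∩ S) ≤ t := by
    intro u hu
    have hds : G.degree u = s := (hmemS u).mp hu
    have hm := hmoore u hu
    have hsp := hsplit u
    rw [hds] at hsp
    rw [hcard] at hm
    by_contra hcon
    push_neg at hcon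
    have ha : (#(G.neighborFinset u ∩ R) : ℤ) + #(G.neighborFinset u ∩ S) = s := by
      exact_mod_cast hsp
    have hmz : 1 + ((r:ℤ) * #(G.neighborFinset u ∩ R) + s * #(G.neighborFinset u ∩ S))
        ≤ r * s + t^2 + 1 := by exact_mod_cast hm
    have hkz : (t:ℤ) + 1 ≤ #(G.neighborFinset u ∩ S) := by exact_mod_cast hcon
    have hsz : (s:ℤ) = r + t := by exact_mod_cast hst
    have hrz : (2:ℤ) ≤ r := by exact_mod_cast hr
    have htz : (1:ℤ) ≤ t := by exact_mod_cast ht1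
    have hfinal := babi_arith1 r s t (#(G.neighborFinset u ∩ R)) (#(G.neighborFinset u ∩ S))
      hrz hsz htz ha hmz
    omega
  -- global sums
  have hswap := babi_sum_inter_comm (G := G) S R
  have hsumS : ∑ u ∈ S, #(G.neighborFinset u ∩ R) + ∑ u ∈ S, #(G.neighborFinset u ∩ S)
      = s * m := by
    rw [← Finset.sum_add_distrib,
      Finset.sum_congr rfl (fun u hu => by rw [hsplit u, (hmemS u).mp hu])]
    simp [Finset.sum_const, mul_comm, ← hmdef]
  have hRsum_le : ∑ v ∈ R, #(G.neighborFinset v ∩ S) ≤ r * m := by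
    calc ∑ v ∈ R, #(G.neighborFinset v ∩ S) ≤ ∑ v ∈ R, r := by
          apply Finset.sum_le_sum
          intro v hv
          have h1 := hsplit v
          rw [(hmemR v).mp hv] at h1
          omega
      _ = r * m := by rw [Finset.sum_const, hbal]; simp [mul_comm]
  have hSsum_le : ∑ u ∈ S, #(G.neighborFinset u ∩ S) ≤ t * m := by
    calc ∑ u ∈ S, #(G.neighborFinset u ∩ S) ≤ ∑ _u ∈ S, t := Finset.sum_le_sum hkS_le
      _ = t * m := by rw [Finset.sum_const]; simp [mul_comm, ← hmdef]
  have hts : t * m + r * m = s * m := by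
    have h1 : (r + t) * m = r * m + t * m := by ring
    rw [hst, h1]; omega
  have hSsum_eq : ∑ u ∈ S, #(G.neighborFinset u ∩ S) = t * m := by omega
  have hRsum_eq : ∑ v ∈ R, #(G.neighborFinset v ∩ S) = r * m := by omega
  -- pointwise equalities
  have hkS_eq : ∀ u ∈ S, #(G.neighborFinset u ∩ S) = t := by
    intro u hu
    by_contra hne
    have hlt : #(G.neighborFinset u ∩ S) < t := lt_of_le_of_ne (hkS_le u hu) hne
    have hslt : ∑ u ∈ S, #(G.neighborFinset u ∩ S) < ∑ _u ∈ S, t :=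
      Finset.sum_lt_sum (fun i hi => hkS_le i hi) ⟨u, hu, hlt⟩
    rw [Finset.sum_const, smul_eq_mul, mul_comm, ← hmdef] at hslt
    omega
  have hkR_eq : ∀ v ∈ R, #(G.neighborFinset v ∩ S) = r := by
    intro v hv
    have hle : ∀ w ∈ R, #(G.neighborFinset w ∩ S) ≤ r := by
      intro w hw
      have h1 := hsplit w
      rw [(hmemR w).mp hw] at h1
      omega
    by_contra hne
    have hlt : #(G.neighborFinset v ∩ S) < r := lt_of_le_of_ne (hle v hv) hne
    have hslt : ∑ v ∈ R, #(G.neighborFinset v ∩ S) < ∑ _v ∈ R, r :=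
      Finset.sum_lt_sum hle ⟨v, hv, hlt⟩
    rw [Finset.sum_const, smul_eq_mul, mul_comm, hbal] at hslt
    omega
  have hNR_sub : ∀ v ∈ R, G.neighborFinset v ⊆ S := by
    intro v hv
    have h1 : #(G.neighborFinset v) = r := (hmemR v).mp hv
    have h2 : G.neighborFinset v ∩ S = G.neighborFinset v :=
      Finset.eq_of_subset_of_card_le Finset.inter_subset_left (by rw [hkR_eq v hv, h1])
    intro x hx
    rw [← h2] at hx
    exact (Finset.mem_inter.mp hx).2
  -- the distinguished vertex of degree s
  obtain ⟨vs, hvs⟩ := hexs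
  have hvsS : vs ∈ S := (hmemS vs).mpr hvs
  have hkvs : #(G.neighborFinset vs ∩ S) = t := hkS_eq vs hvsS
  have havs : #(G.neighborFinset vs ∩ R) = r := by
    have h1 := hsplit vs
    rw [hvs] at h1
    omega
  have hT := babi_moore_card h3 h4 vs
  have hTcard_eq : (insert vs (G.neighborFinset vs) ∪
      (G.neighborFinset vs).biUnion (fun w => G.neighborFinset w \ {vs})).card
      = Fintype.card V := by
    rw [hT]
    have hsub2 : ∑ w ∈ G.neighborFinset vs, (G.degree w - 1) + G.degree vs
        = ∑ w ∈ G.neighborFinset vs, G.degree w := by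
      have hcardN : G.degree vs = #(G.neighborFinset vs) := rfl
      rw [hcardN, Finset.card_eq_sum_ones, ← Finset.sum_add_distrib]
      apply Finset.sum_congr rfl
      intro w _
      have := hdeg w
      omega
    rw [hsumdeg vs, havs, hkvs, hvs] at hsub2
    have key : r * r + s * t = r * s + t^2 := by rw [hst]; ring
    rw [hvs, hcard]
    omega
  have hTuniv : (insert vs (G.neighborFinset vs) ∪
      (G.neighborFinset vs).biUnion (fun w => G.neighborFinset w \ {vs})) = Finset.univ :=
    Finset.eq_univ_of_card _ hTcard_eq
  -- coverage of R by distance ≤ 2 from vs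
  have hcov : R \ G.neighborFinset vs ⊆
      (G.neighborFinset vs ∩ S).biUnion (fun w => G.neighborFinset w ∩ R) := by
    intro v hv
    obtain ⟨hvR, hvN⟩ := Finset.mem_sdiff.mp hv
    have hvT : v ∈ (insert vs (G.neighborFinset vs) ∪
        (G.neighborFinset vs).biUnion (fun w => G.neighborFinset w \ {vs})) := by
      rw [hTuniv]; exact Finset.mem_univ v
    rcases Finset.mem_union.mp hvT with h1 | h2
    · rcases Finset.mem_insert.mp h1 with rfl | h1'
      · rw [hmemR] at hvR
        omega
      · exact absurd h1' hvN
    · obtain ⟨w, hw, hvw⟩ := Finset.mem_biUnion.mp h2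
      rw [Finset.mem_sdiff] at hvw
      have hwS : w ∈ S := by
        rcases hdeg w with hwr | hws
        · exfalso
          have hwR : w ∈ R := (hmemR w).mpr hwr
          have hvS : v ∈ S := hNR_sub w hwR hvw.1
          rw [hmemS] at hvS
          rw [hmemR] at hvR
          omega
        · exact (hmemS w).mpr hws
      exact Finset.mem_biUnion.mpr ⟨w, Finset.mem_inter.mpr ⟨hw, hwS⟩,
        Finset.mem_inter.mpr ⟨hvw.1, hvR⟩⟩
  have hc1 : #(R ∩ G.neighborFinset vs) + #(R \ G.neighborFinset vs) = #R :=
    Finset.card_inter_add_card_sdiff R _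
  have hc2 : #(R ∩ G.neighborFinset vs) = r := by rw [Finset.inter_comm]; exact havs
  have hc3 : #(R \ G.neighborFinset vs)
      ≤ #((G.neighborFinset vs ∩ S).biUnion (fun w => G.neighborFinset w ∩ R)) :=
    Finset.card_le_card hcov
  have hc4 : #((G.neighborFinset vs ∩ S).biUnion (fun w => G.neighborFinset w ∩ R))
      ≤ ∑ w ∈ G.neighborFinset vs ∩ S, #(G.neighborFinset w ∩ R) :=
    Finset.card_biUnion_le
  have hc6 : ∑ w ∈ G.neighborFinset vs ∩ S, #(G.neighborFinset w ∩ R) = t * r := by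
    have hc5 : ∀ w ∈ G.neighborFinset vs ∩ S, #(G.neighborFinset w ∩ R) = r := by
      intro w hw
      have hwS := (Finset.mem_inter.mp hw).2
      have h1 := hsplit w
      rw [(hmemS w).mp hwS] at h1
      have h2 := hkS_eq w hwS
      omega
    rw [Finset.sum_congr rfl hc5, Finset.sum_const, hkvs, smul_eq_mul]
  have hfin : m ≤ t * r + r := by
    rw [hbal] at hc1
    omega
  -- final integer arithmetic
  have hineq : r * s + t^2 + 1 ≤ 2 * (t * r + r) := by
    rw [← hcard, hn2m]
    exact Nat.mul_le_mul_left 2 hfin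
  have hsz : (s:ℤ) = r + t := by exact_mod_cast hst
  have hrz : (2:ℤ) ≤ r := by exact_mod_cast hr
  have htz : (1:ℤ) ≤ t := by exact_mod_cast ht1
  have hiz : (r:ℤ) * s + t^2 + 1 ≤ 2 * (t * r + r) := by exact_mod_cast hineq
  rw [hsz] at hiz
  obtain ⟨hr2, ht2⟩ := babi_arith2 (r:ℤ) (t:ℤ) hrz htz hiz
  have hr2' : r = 2 := by exact_mod_cast hr2
  have ht2' : t = 1 := by exact_mod_cast ht2
  exact ⟨hr2', by omega⟩

end BabiAux

/-- equality in the girth-5 bound forces `r = 2`, `s = 3`. -/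
theorem stmt_8 (r s : ℕ) (hr : 2 ≤ r) (hrs : r < s)
    (h : ∃ G : SimpleGraph (Fin (r * s + (s - r) ^ 2 + 1)), IsBabi r s 5 G) :
    r = 2 ∧ s = 3 := by
  classical
  obtain ⟨G, hg5, hdeg0, hexr, hexs, hbal⟩ := h
  haveI : DecidableRel G.Adj := Classical.decRel _
  have hdegree : ∀ v, deg G v = G.degree v := by
    intro v
    rw [deg, Set.ncard_eq_toFinset_card']
    rfl
  have hdeg : ∀ v, G.degree v = r ∨ G.degree v = s := by
    intro v; rw [← hdegree]; exact hdeg0 v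
  have h3 : ∀ ⦃a b c : Fin (r * s + (s - r) ^ 2 + 1)⦄,
      G.Adj a b → G.Adj b c → G.Adj c a → False := by
    intro a b c hab hbc hca
    obtain ⟨w, hw, hl⟩ := babi_triangle_cycle hab hbc hca
    have := babi_girth_min_len hg5 w hw
    omega
  have h4 : ∀ ⦃a b x y : Fin (r * s + (s - r) ^ 2 + 1)⦄, a ≠ b → x ≠ y → G.Adj a x →
      G.Adj x b → G.Adj b y → G.Adj y a → False := by
    intro a b x y hne hxy hax hxb hby hya
    obtain ⟨w, hw, hl⟩ := babi_square_cycle hax hxb hby hya hne hxy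
    have := babi_girth_min_len hg5 w hw
    omega
  have hexs' : ∃ v, G.degree v = s := by
    obtain ⟨v, hv⟩ := hexs
    exact ⟨v, by rw [← hdegree]; exact hv⟩
  have hbal' : (Finset.univ.filter (fun v => G.degree v = r)).card =
      (Finset.univ.filter (fun v => G.degree v = s)).card := by
    have h1 : {v | deg G v = r}.ncard = (Finset.univ.filter (fun v => G.degree v = r)).card := by
      rw [Set.ncard_eq_toFinset_card', Set.toFinset_setOf]
      congr 1
      apply Finset.filter_congr
      intro v _
      simp [hdegree v]
    have h2 : {v | deg G v = s}.ncard = (Finset.univ.filter (fun v => G.degree v = s)).card := by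
      rw [Set.ncard_eq_toFinset_card', Set.toFinset_setOf]
      congr 1
      apply Finset.filter_congr
      intro v _
      simp [hdegree v]
    rw [← h1, ← h2]
    exact hbal
  exact babi_main hr hrs h3 h4 hdeg hexs' hbal' (by simp)
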